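/- (Gronwall-type lemma, version 1) Let α ∈ (0,1), C > 0, and let E : (0,r₀] → [0,∞) be absolutely continuous, differentiable a.e., satisfying E(r) ≤ (r + C·r^{1+α})·E'(r) for a.e. r ∈ (0,r₀]. Then the function r ↦ (E(r)/r)·(1 + C·r^α)^{1/α} is nondecreasing on (0,r₀], and lim_{r→0⁺} E(r)/r exists and is finite, bounded by (E(r₀)/r₀)·(1 + C·r₀^α)^{1/α}. -/

import Mathlib

open MeasureTheory Set Filter intervalIntegral
open scoped Topology

noncomputable def wfun (α C : ℝ) (x : ℝ) : ℝ := (1 + C * x ^ α) ^ (1/α) / x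
noncomputable def wfun' (α C : ℝ) (x : ℝ) : ℝ :=
  -(((1 + C * x ^ α) ^ (1/α)) / (x ^ 2 * (1 + C * x ^ α)))

lemma hasDerivAt_wfun (α C : ℝ) (hα : 0 < α) (hC : 0 < C) {x : ℝ} (hx : 0 < x) :
    HasDerivAt (wfun α C) (wfun' α C x) x := by
  have hq : 0 < x ^ α := Real.rpow_pos_of_pos hx α
  have hA : 0 < 1 + C * x ^ α := by positivity
  have h1 : HasDerivAt (fun y : ℝ => 1 + C * y ^ α) (C * (α * x ^ (α - 1))) x := by
    simpa using ((Real.hasDerivAt_rpow_const (p := α) (Or.inl hx.ne')).const_mul C).const_add 1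
  have h2 : HasDerivAt (fun y : ℝ => (1 + C * y ^ α) ^ (1/α))
      ((C * (α * x ^ (α - 1))) * (1/α) * (1 + C * x ^ α) ^ (1/α - 1)) x :=
    h1.rpow_const (Or.inl hA.ne')
  have h3 := h2.div (hasDerivAt_id x) hx.ne'
  convert h3 using 1
  all_goals try rfl
  have e1 : x ^ (α - 1) = x ^ α / x := by
    rw [Real.rpow_sub hx, Real.rpow_one]
  have e2 : (1 + C * x ^ α) ^ (1/α - 1) = (1 + C * x ^ α) ^ (1/α) / (1 + C * x ^ α) := by
    rw [Real.rpow_sub hA, Real.rpow_one]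
  rw [wfun', e1, e2]
  simp only [id]
  field_simp
  ring

lemma wfun_pos (α C : ℝ) (hC : 0 < C) {x : ℝ} (hx : 0 < x) : 0 < wfun α C x := by
  have hq : 0 < x ^ α := Real.rpow_pos_of_pos hx α
  have hA : 0 < 1 + C * x ^ α := by positivity
  exact div_pos (Real.rpow_pos_of_pos hA _) hx

lemma wfun_continuousOn (α C : ℝ) (hα : 0 < α) : ContinuousOn (wfun α C) (Ioi 0) := by
  apply ContinuousOn.div
  · apply ContinuousOn.rpow_const
    · exact (continuousOn_const.add (continuousOn_const.mul
        (continuousOn_id.rpow_const (fun x hx => Or.inl (ne_of_gt hx)))))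
    · intro x hx; exact Or.inr (by positivity)
  · exact continuousOn_id
  · intro x hx; exact ne_of_gt (mem_Ioi.1 hx)

lemma wfun'_continuousOn (α C : ℝ) (hα : 0 < α) (hC : 0 < C) : ContinuousOn (wfun' α C) (Ioi 0) := by
  apply ContinuousOn.neg
  apply ContinuousOn.div
  · apply ContinuousOn.rpow_const
    · exact (continuousOn_const.add (continuousOn_const.mul
        (continuousOn_id.rpow_const (fun x hx => Or.inl (ne_of_gt hx)))))
    · intro x hx; exact Or.inr (by positivity)
  · exact (continuousOn_pow 2).mul (continuousOn_const.add (continuousOn_const.mul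
        (continuousOn_id.rpow_const (fun x hx => Or.inl (ne_of_gt hx)))))
  · intro x hx
    have hx' : (0:ℝ) < x := mem_Ioi.1 hx
    have hq : 0 < x ^ α := Real.rpow_pos_of_pos hx' α
    have : (0:ℝ) < x ^ 2 * (1 + C * x ^ α) := by positivity
    exact ne_of_gt this

lemma key_nonneg (α C : ℝ) (_hα : 0 < α) (hC : 0 < C) {x e f : ℝ} (hx : 0 < x)
    (he : 0 ≤ e) (hef : e ≤ (x + C * x ^ (1+α)) * f) :
    0 ≤ f * wfun α C x + e * wfun' α C x := by
  have hq : 0 < x ^ α := Real.rpow_pos_of_pos hx α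
  have hA : 0 < 1 + C * x ^ α := by positivity
  have hP : 0 < (1 + C * x ^ α) ^ (1/α) := Real.rpow_pos_of_pos hA _
  have hxa : x ^ (1+α) = x * x ^ α := by
    rw [Real.rpow_add hx, Real.rpow_one]
  have hfac : x + C * x ^ (1+α) = x * (1 + C * x ^ α) := by rw [hxa]; ring
  rw [hfac] at hef
  have hf : 0 ≤ f := by
    nlinarith [mul_pos hx hA]
  rw [wfun, wfun']
  have h1 : 0 ≤ ((1 + C * x ^ α) ^ (1/α) / (x^2 * (1 + C * x ^ α))) *
      (x * (1 + C * x ^ α) * f - e) :=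
    mul_nonneg (by positivity) (sub_nonneg.2 hef)
  have hx2 : (0:ℝ) < x ^ 2 := by positivity
  calc (0:ℝ) ≤ ((1 + C * x ^ α) ^ (1/α) / (x^2 * (1 + C * x ^ α))) *
      (x * (1 + C * x ^ α) * f - e) := h1
    _ = f * ((1 + C * x ^ α) ^ (1/α) / x) +
        e * -(((1 + C * x ^ α) ^ (1/α)) / (x ^ 2 * (1 + C * x ^ α))) := by
      field_simp
      ring

theorem stmt9
    (α C r₀ : ℝ) (hα : α ∈ Set.Ioo (0:ℝ) 1) (hC : 0 < C) (hr₀ : 0 < r₀)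
    (E : ℝ → ℝ)
    (hnonneg : ∀ r ∈ Set.Ioc 0 r₀, 0 ≤ E r)
    (hAC : ∀ s ∈ Set.Ioc 0 r₀, ∀ t ∈ Set.Ioc 0 r₀, s ≤ t →
      E t - E s = ∫ x in s..t, deriv E x)
    (hineq : ∀ᵐ r ∂(volume.restrict (Set.Ioc 0 r₀)),
      E r ≤ (r + C * r ^ (1 + α)) * deriv E r) :
    MonotoneOn (fun r => (E r / r) * (1 + C * r ^ α) ^ (1/α)) (Set.Ioc 0 r₀) ∧
    ∃ l : ℝ, Tendsto (fun r => E r / r) (𝓝[>] (0:ℝ)) (𝓝 l) ∧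
      l ≤ (E r₀ / r₀) * (1 + C * r₀ ^ α) ^ (1/α) := by
  obtain ⟨hα0, hα1⟩ := hα
  set F := deriv E with hF
  -- combined a.e. facts on (0, r₀]
  have hae : ∀ᵐ r ∂(volume.restrict (Set.Ioc 0 r₀)),
      0 ≤ F r ∧ E r ≤ (r + C * r ^ (1 + α)) * F r := by
    filter_upwards [hineq, ae_restrict_mem measurableSet_Ioc] with r h1 h2
    have hrpos : 0 < r := h2.1
    have hq : 0 < r ^ (1+α) := Real.rpow_pos_of_pos hrpos _
    have hP : 0 < r + C * r ^ (1+α) := by positivity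
    refine ⟨?_, h1⟩
    nlinarith [hnonneg r h2]
  -- E is monotone on (0, r₀]
  have hmono : MonotoneOn E (Set.Ioc 0 r₀) := by
    intro s hs t ht hst
    have h := hAC s hs t ht hst
    have h0 : 0 ≤ ∫ x in s..t, F x := by
      apply intervalIntegral.integral_nonneg_of_ae_restrict hst
      have hsub : Icc s t ⊆ Set.Ioc 0 r₀ := fun x hx => ⟨hs.1.trans_le hx.1, hx.2.trans ht.2⟩
      filter_upwards [ae_restrict_of_ae_restrict_of_subset hsub hae] with x hx using hx.1
    linarith
  -- integrability of deriv E on compact subintervals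
  have hFmeas : Measurable F := measurable_deriv E
  have hFnn : ∀ A : Set ℝ, A ⊆ Set.Ioc 0 r₀ → (0 ≤ᵐ[volume.restrict A] F) := by
    intro A hA
    filter_upwards [ae_restrict_of_ae_restrict_of_subset hA hae] with y hy using hy.1
  have hInt : ∀ s ∈ Set.Ioc 0 r₀, ∀ t ∈ Set.Ioc 0 r₀, s ≤ t →
      IntegrableOn F (Ioc s t) volume := by
    intro s hs t ht hst
    set S : Set ℝ := {x | x ∈ Icc s t ∧ IntegrableOn F (Ioc s x) volume} with hS
    have hsS : s ∈ S := ⟨⟨le_refl s, hst⟩, by rw [Ioc_self]; exact integrableOn_empty⟩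
    have hbdd : BddAbove S := ⟨t, fun x hx => hx.1.2⟩
    set c := sSup S with hc
    have hsc : s ≤ c := le_csSup hbdd hsS
    have hct : c ≤ t := csSup_le ⟨s, hsS⟩ (fun x hx => hx.1.2)
    have hdown : ∀ x, s ≤ x → x < c → IntegrableOn F (Ioc s x) volume := by
      intro x h1 h2
      obtain ⟨z, hzS, hxz⟩ := exists_lt_of_lt_csSup ⟨s, hsS⟩ h2
      exact hzS.2.mono_set (Ioc_subset_Ioc_right hxz.le)
    have hcS : IntegrableOn F (Ioc s c) volume := by
      rcases eq_or_lt_of_le hsc with h | h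
      · rw [← h, Ioc_self]; exact integrableOn_empty
      · have hIoo : IntegrableOn F (Ioo s c) volume := by
          set x : ℕ → ℝ := fun n => c - (c - s) / (n + 1) with hx
          have hcs0 : (0:ℝ) < c - s := sub_pos.2 h
          have hxlt : ∀ n : ℕ, x n < c := by
            intro n
            have : (0:ℝ) < (c - s) / (n + 1) := by positivity
            simpa [hx] using sub_lt_self c this
          have hxs : ∀ n : ℕ, s ≤ x n := by
            intro n
            have h1 : (c - s) / (n + 1) ≤ c - s := by
              apply div_le_self hcs0.le
              have : (0:ℝ) ≤ (n:ℝ) := Nat.cast_nonneg n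
              linarith
            simp only [hx]
            linarith
          have hxmono : Monotone (fun n : ℕ => Ioc s (x n)) := by
            intro a b hab
            apply Ioc_subset_Ioc_right
            have h1 : ((a:ℝ) + 1) ≤ (b:ℝ) + 1 := by
              have : (a:ℝ) ≤ (b:ℝ) := Nat.cast_le.2 hab
              linarith
            have h2 : (c - s) / (b + 1) ≤ (c - s) / (a + 1) := by
              apply div_le_div_of_nonneg_left hcs0.le (by positivity) h1
            simp only [hx]; linarith
          have hunion : Ioo s c = ⋃ n, Ioc s (x n) := by
            ext y
            simp only [mem_Ioo, mem_iUnion, mem_Ioc]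
            constructor
            · rintro ⟨hy1, hy2⟩
              have hcy : (0:ℝ) < c - y := sub_pos.2 hy2
              obtain ⟨n, hn⟩ := exists_nat_gt ((c - s) / (c - y))
              refine ⟨n, hy1, ?_⟩
              have h1 : (c - s) / (c - y) < (n:ℝ) + 1 := hn.trans (by linarith)
              have h2 : c - s < ((n:ℝ) + 1) * (c - y) := by
                rwa [div_lt_iff₀ hcy] at h1
              have h3 : (c - s) / ((n:ℝ) + 1) < c - y := by
                rw [div_lt_iff₀ (by positivity)]
                linarith [h2]
              simp only [hx]; linarith
            · rintro ⟨n, hy1, hy2⟩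
              exact ⟨hy1, lt_of_le_of_lt hy2 (hxlt n)⟩
          have hsub : ∀ n, Ioc s (x n) ⊆ Set.Ioc 0 r₀ := by
            intro n y hy
            exact ⟨hs.1.trans_le hy.1.le, hy.2.trans ((hxlt n).le.trans (hct.trans ht.2))⟩
          set μ := volume.withDensity (fun y => ENNReal.ofReal (F y)) with hμ
          have hμval : ∀ n, μ (Ioc s (x n)) ≤ ENNReal.ofReal (E t - E s) := by
            intro n
            have hint : IntegrableOn F (Ioc s (x n)) volume := hdown (x n) (hxs n) (hxlt n)
            have hxn0 : x n ∈ Set.Ioc 0 r₀ :=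
              ⟨hs.1.trans_le (hxs n), ((hxlt n).le.trans (hct.trans ht.2))⟩
            have heq : ∫ y in Ioc s (x n), F y = E (x n) - E s := by
              rw [← intervalIntegral.integral_of_le (hxs n)]
              exact (hAC s hs (x n) hxn0 (hxs n)).symm
            have : μ (Ioc s (x n)) = ENNReal.ofReal (E (x n) - E s) := by
              rw [hμ, withDensity_apply _ measurableSet_Ioc,
                ← MeasureTheory.ofReal_integral_eq_lintegral_ofReal hint (hFnn _ (hsub n)), heq]
            rw [this]
            have hle : E (x n) ≤ E t := hmono hxn0 ht ((hxlt n).le.trans hct)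
            exact ENNReal.ofReal_le_ofReal (by linarith)
          have hμIoo : μ (Ioo s c) ≤ ENNReal.ofReal (E t - E s) := by
            rw [hunion, Directed.measure_iUnion (hxmono.directed_le)]
            exact iSup_le hμval
          constructor
          · exact hFmeas.aestronglyMeasurable
          · rw [hasFiniteIntegral_iff_ofReal (hFnn _ (fun y hy =>
              ⟨hs.1.trans hy.1, hy.2.le.trans (hct.trans ht.2)⟩))]
            have : ∫⁻ y in Ioo s c, ENNReal.ofReal (F y) = μ (Ioo s c) := by
              rw [hμ, withDensity_apply _ measurableSet_Ioo]
            rw [this]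
            exact lt_of_le_of_lt hμIoo ENNReal.ofReal_lt_top
        exact hIoo.congr_set_ae (MeasureTheory.Ioo_ae_eq_Ioc).symm
    rcases eq_or_lt_of_le hct with hceq | hclt
    · rwa [hceq] at hcS
    · exfalso
      have hconst : ∀ x ∈ Ioc c t, E x = E s := by
        intro x hx
        have hx0 : x ∈ Set.Ioc 0 r₀ :=
          ⟨hs.1.trans_le (hsc.trans hx.1.le), hx.2.trans ht.2⟩
        have hni : ¬ IntervalIntegrable F volume s x := by
          rw [intervalIntegrable_iff_integrableOn_Ioc_of_le (hsc.trans hx.1.le)]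
          intro hcon
          have hxS : x ∈ S := ⟨⟨hsc.trans hx.1.le, hx.2⟩, hcon⟩
          exact absurd (le_csSup hbdd hxS) (not_le.2 hx.1)
        have h1 := hAC s hs x hx0 (hsc.trans hx.1.le)
        rw [intervalIntegral.integral_undef hni] at h1
        linarith
      have hzero : ∀ y ∈ Ioo c t, F y = 0 := by
        intro y hy
        have hEeq : E =ᶠ[𝓝 y] fun _ => E s := by
          filter_upwards [Ioo_mem_nhds hy.1 hy.2] with z hz using hconst z ⟨hz.1, hz.2.le⟩
        rw [hF, hEeq.deriv_eq, deriv_const]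
      set m := (c + t) / 2 with hm
      have hcm : c < m := by rw [hm]; linarith
      have hmt : m < t := by rw [hm]; linarith
      have h2 : IntegrableOn F (Ioc c m) volume := by
        rw [integrableOn_congr_fun (g := fun _ => (0:ℝ))
          (fun y hy => hzero y ⟨hy.1, lt_of_le_of_lt hy.2 hmt⟩) measurableSet_Ioc]
        exact integrableOn_zero
      have h3 : IntegrableOn F (Ioc s m) volume := by
        rw [← Ioc_union_Ioc_eq_Ioc hsc hcm.le]
        exact hcS.union h2
      have hmS : m ∈ S := ⟨⟨hsc.trans hcm.le, hmt.le⟩, h3⟩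
      exact absurd (le_csSup hbdd hmS) (not_le.2 hcm)
  -- the main monotonicity, stated via wfun
  have hw'meas : Measurable (wfun' α C) := by
    unfold wfun'
    fun_prop
  have hG : ∀ s ∈ Set.Ioc 0 r₀, ∀ t ∈ Set.Ioc 0 r₀, s ≤ t →
      E s * wfun α C s ≤ E t * wfun α C t := by
    intro s hs t ht hst
    have hspos : 0 < s := hs.1
    have hsubIcc : Icc s t ⊆ Set.Ioc 0 r₀ := fun x hx => ⟨hspos.trans_le hx.1, hx.2.trans ht.2⟩
    have hIccIoi : Icc s t ⊆ Ioi (0:ℝ) := fun x hx => hspos.trans_le hx.1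
    have huIcc : uIcc s t = Icc s t := uIcc_of_le hst
    have hFint : IntegrableOn F (Ioc s t) volume := hInt s hs t ht hst
    have hFi : IntervalIntegrable F volume s t :=
      (intervalIntegrable_iff_integrableOn_Ioc_of_le hst).2 hFint
    have hw_cont : ContinuousOn (wfun α C) (Icc s t) := (wfun_continuousOn α C hα0).mono hIccIoi
    have hw'_cont : ContinuousOn (wfun' α C) (Icc s t) :=
      (wfun'_continuousOn α C hα0 hC).mono hIccIoi
    set φ : ℝ → ℝ := fun x => ∫ u in s..x, F u with hφ
    have hEeq : ∀ x ∈ Icc s t, E x = E s + φ x := by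
      intro x hx
      have := hAC s hs x (hsubIcc hx) hx.1
      simp only [hφ]; linarith
    have hφcont : ContinuousOn φ (Icc s t) := by
      rw [← huIcc]
      apply intervalIntegral.continuousOn_primitive_interval
      rw [huIcc]
      exact hFint.congr_set_ae (MeasureTheory.Ioc_ae_eq_Icc).symm
    have hFTCw : ∀ u ∈ Icc s t, (∫ x in u..t, wfun' α C x) = wfun α C t - wfun α C u := by
      intro u hu
      have huIcc2 : uIcc u t = Icc u t := uIcc_of_le hu.2
      apply intervalIntegral.integral_eq_sub_of_hasDerivAt
      · intro x hx
        rw [huIcc2] at hx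
        exact hasDerivAt_wfun α C hα0 hC (hspos.trans_le (hu.1.trans hx.1))
      · apply ContinuousOn.intervalIntegrable
        rw [huIcc2]
        exact hw'_cont.mono (fun x hx => ⟨hu.1.trans hx.1, hx.2⟩)
    -- Fubini step
    set ν := volume.restrict (Ioc s t) with hν
    haveI hνfin : IsFiniteMeasure ν := by
      constructor
      rw [hν, Measure.restrict_apply_univ]
      exact measure_Ioc_lt_top
    have hFν : Integrable F ν := hFint
    set f : ℝ → ℝ → ℝ := fun x u => (Ioc s x).indicator F u * wfun' α C x with hf
    have hfmeas : Measurable (Function.uncurry f) := by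
      have hD : MeasurableSet {p : ℝ × ℝ | p.2 ∈ Ioc s p.1} := by
        apply MeasurableSet.inter
        · exact measurableSet_lt measurable_const measurable_snd
        · exact measurableSet_le measurable_snd measurable_fst
      have heq : Function.uncurry f = fun p : ℝ × ℝ =>
          ({p : ℝ × ℝ | p.2 ∈ Ioc s p.1}.indicator (fun q => F q.2) p) * wfun' α C p.1 := by
        funext p
        simp only [Function.uncurry, hf, Set.indicator_apply, mem_setOf_eq]
      rw [heq]
      exact ((hFmeas.comp measurable_snd).indicator hD).mul (hw'meas.comp measurable_fst)
    obtain ⟨M, hM⟩ : ∃ M, ∀ x ∈ Icc s t, ‖wfun' α C x‖ ≤ M :=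
      isCompact_Icc.exists_bound_of_continuousOn hw'_cont
    have hM0 : 0 ≤ M := le_trans (norm_nonneg _) (hM s ⟨le_refl s, hst⟩)
    have hgint : Integrable (fun p : ℝ × ℝ => |F p.2| * M) (ν.prod ν) := by
      rw [integrable_prod_iff]
      · refine ⟨Eventually.of_forall (fun x => (hFν.abs.mul_const M)), ?_⟩
        have hcf : (fun x : ℝ => ∫ y, ‖|F (x, y).2| * M‖ ∂ν)
            = fun _ : ℝ => ∫ y, ‖|F y| * M‖ ∂ν := by
          funext x; rfl
        rw [hcf]
        exact integrable_const _
      · exact ((hFmeas.comp measurable_snd).abs.mul_const M).aestronglyMeasurable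
    have hfint : Integrable (Function.uncurry f) (ν.prod ν) := by
      apply Integrable.mono' hgint hfmeas.aestronglyMeasurable
      have hprod : ν.prod ν = (volume.prod volume).restrict ((Ioc s t) ×ˢ (Ioc s t)) := by
        rw [hν, Measure.prod_restrict]
      rw [hprod]
      filter_upwards [ae_restrict_mem (measurableSet_Ioc.prod measurableSet_Ioc)] with p hp
      have hx : p.1 ∈ Ioc s t := hp.1
      have h1 : ‖Function.uncurry f p‖ = ‖(Ioc s p.1).indicator F p.2‖ * ‖wfun' α C p.1‖ := by
        simp only [Function.uncurry, hf, norm_mul]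
      rw [h1]
      have h2 : ‖(Ioc s p.1).indicator F p.2‖ ≤ |F p.2| := by
        simpa [Real.norm_eq_abs] using norm_indicator_le_norm_self F p.2
      exact mul_le_mul h2 (hM p.1 ⟨hx.1.le, hx.2⟩) (norm_nonneg _) (abs_nonneg _)
    have hswap := MeasureTheory.integral_integral_swap (μ := ν) (ν := ν) (f := f) hfint
    have hLHS : ∫ x in s..t, φ x * wfun' α C x = ∫ x, (∫ u, f x u ∂ν) ∂ν := by
      rw [intervalIntegral.integral_of_le hst]
      apply setIntegral_congr_fun measurableSet_Ioc
      intro x hx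
      have h1 : φ x = ∫ u, (Ioc s x).indicator F u ∂ν := by
        rw [hν, setIntegral_indicator measurableSet_Ioc,
          inter_eq_self_of_subset_right (Ioc_subset_Ioc_right hx.2)]
        simp only [hφ]
        rw [intervalIntegral.integral_of_le hx.1.le]
      calc φ x * wfun' α C x
          = (∫ u, (Ioc s x).indicator F u ∂ν) * wfun' α C x := by rw [h1]
        _ = ∫ u, (Ioc s x).indicator F u * wfun' α C x ∂ν := (MeasureTheory.integral_mul_const _ _).symm
    have hRHS : ∀ u ∈ Ioc s t, (∫ x, f x u ∂ν) = F u * (wfun α C t - wfun α C u) := by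
      intro u hu
      have hinter : Ioc s t ∩ Ici u = Icc u t := by
        ext x
        simp only [mem_inter_iff, mem_Ioc, mem_Ici, mem_Icc]
        constructor
        · rintro ⟨⟨_, h2⟩, h3⟩; exact ⟨h3, h2⟩
        · rintro ⟨h1, h2⟩; exact ⟨⟨hu.1.trans_le h1, h2⟩, h1⟩
      have heq : ∀ x, f x u = (Ici u).indicator (fun x => F u * wfun' α C x) x := by
        intro x
        simp only [hf, Set.indicator_apply, mem_Ioc, mem_Ici]
        by_cases h : u ≤ x
        · simp [h, hu.1]
        · simp [h]
      calc (∫ x, f x u ∂ν)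
          = ∫ x, (Ici u).indicator (fun x => F u * wfun' α C x) x ∂ν := by simp_rw [heq]
        _ = ∫ x in Ioc s t ∩ Ici u, F u * wfun' α C x := by
            rw [hν, setIntegral_indicator measurableSet_Ici]
        _ = F u * ∫ x in Icc u t, wfun' α C x := by rw [hinter, MeasureTheory.integral_const_mul]
        _ = F u * (wfun α C t - wfun α C u) := by
            rw [integral_Icc_eq_integral_Ioc, ← intervalIntegral.integral_of_le hu.2,
              hFTCw u ⟨hu.1.le, hu.2⟩]
    have hfub : ∫ x in s..t, φ x * wfun' α C x
        = ∫ u in s..t, F u * (wfun α C t - wfun α C u) := by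
      rw [hLHS, hswap, intervalIntegral.integral_of_le hst]
      exact setIntegral_congr_fun measurableSet_Ioc (fun u hu => hRHS u hu)
    have hwu : ContinuousOn (fun x => wfun α C x) (uIcc s t) := by rw [huIcc]; exact hw_cont
    have hFw_i : IntervalIntegrable (fun x => F x * wfun α C x) volume s t :=
      hFi.mul_continuousOn hwu
    have hφw'_i : IntervalIntegrable (fun x => φ x * wfun' α C x) volume s t := by
      apply ContinuousOn.intervalIntegrable
      rw [huIcc]; exact hφcont.mul hw'_cont
    have hconstw'_i : IntervalIntegrable (fun x => E s * wfun' α C x) volume s t := by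
      apply ContinuousOn.intervalIntegrable
      rw [huIcc]; exact continuousOn_const.mul hw'_cont
    have hEw'_i : IntervalIntegrable (fun x => E x * wfun' α C x) volume s t := by
      rw [intervalIntegrable_iff_integrableOn_Ioc_of_le hst,
        integrableOn_congr_fun (g := fun x => (E s + φ x) * wfun' α C x)
          (fun x hx => by rw [hEeq x ⟨hx.1.le, hx.2⟩]) measurableSet_Ioc,
        ← intervalIntegrable_iff_integrableOn_Ioc_of_le hst]
      apply ContinuousOn.intervalIntegrable
      rw [huIcc]; exact (continuousOn_const.add hφcont).mul hw'_cont
    have hkeyid : E t * wfun α C t - E s * wfun α C s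
        = ∫ x in s..t, (F x * wfun α C x + E x * wfun' α C x) := by
      rw [intervalIntegral.integral_add hFw_i hEw'_i]
      have e2 : (∫ x in s..t, E x * wfun' α C x)
          = ∫ x in s..t, (E s * wfun' α C x + φ x * wfun' α C x) := by
        apply intervalIntegral.integral_congr
        intro x hx
        rw [huIcc] at hx
        show E x * wfun' α C x = E s * wfun' α C x + φ x * wfun' α C x
        rw [hEeq x hx]; ring
      have e3 : (∫ x in s..t, (E s * wfun' α C x + φ x * wfun' α C x))
          = E s * (wfun α C t - wfun α C s) + ∫ x in s..t, φ x * wfun' α C x := by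
        rw [intervalIntegral.integral_add hconstw'_i hφw'_i,
          intervalIntegral.integral_const_mul, hFTCw s ⟨le_refl s, hst⟩]
      have e5 : (∫ u in s..t, F u * (wfun α C t - wfun α C u))
          = (E t - E s) * wfun α C t - ∫ x in s..t, F x * wfun α C x := by
        have hfn : (fun u => F u * (wfun α C t - wfun α C u))
            = fun u => F u * wfun α C t - F u * wfun α C u := by funext u; ring
        rw [hfn, intervalIntegral.integral_sub (hFi.mul_const _) hFw_i,
          intervalIntegral.integral_mul_const, ← hAC s hs t ht hst]
      rw [e2, e3, hfub, e5]
      ring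
    have hpos : 0 ≤ ∫ x in s..t, (F x * wfun α C x + E x * wfun' α C x) := by
      apply intervalIntegral.integral_nonneg_of_ae_restrict hst
      filter_upwards [ae_restrict_of_ae_restrict_of_subset hsubIcc hae,
        ae_restrict_mem measurableSet_Icc] with x h1 h2
      exact key_nonneg α C hα0 hC (hspos.trans_le h2.1) (hnonneg x (hsubIcc h2)) h1.2
    linarith [hkeyid ▸ hpos]
  have hGmono : MonotoneOn (fun r => (E r / r) * (1 + C * r ^ α) ^ (1/α)) (Set.Ioc 0 r₀) := by
    intro s hs t ht hst
    have := hG s hs t ht hst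
    simpa only [wfun, div_mul_eq_mul_div, mul_div_assoc, mul_comm] using this
  refine ⟨hGmono, ?_⟩
  set Gw : ℝ → ℝ := fun r => E r * wfun α C r with hGw
  have hGnn : ∀ r ∈ Ioo (0:ℝ) r₀, 0 ≤ Gw r := fun r hr =>
    mul_nonneg (hnonneg r ⟨hr.1, hr.2.le⟩) (wfun_pos α C hC hr.1).le
  have hmonoIoo : MonotoneOn Gw (Ioo 0 r₀) := fun a ha b hb hab =>
    hG a ⟨ha.1, ha.2.le⟩ b ⟨hb.1, hb.2.le⟩ hab
  have hne : (Ioo (0:ℝ) r₀).Nonempty := ⟨r₀/2, by constructor <;> [positivity; linarith]⟩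
  have hbddb : BddBelow (Gw '' Ioo 0 r₀) := by
    refine ⟨0, ?_⟩
    rintro y ⟨x, hx, rfl⟩
    exact hGnn x hx
  set l := sInf (Gw '' Ioo 0 r₀) with hl
  have htend : Tendsto Gw (𝓝[>] (0:ℝ)) (𝓝 l) :=
    MonotoneOn.tendsto_nhdsWithin_Ioo_right hne hmonoIoo hbddb
  have hdenom : Tendsto (fun r : ℝ => (1 + C * r ^ α) ^ (1/α)) (𝓝[>] (0:ℝ)) (𝓝 1) := by
    have h1 : Tendsto (fun r : ℝ => r ^ α) (𝓝[>] (0:ℝ)) (𝓝 0) := by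
      have := (Real.continuousAt_rpow_const 0 α (Or.inr hα0.le)).tendsto
      rw [Real.zero_rpow hα0.ne'] at this
      exact this.mono_left nhdsWithin_le_nhds
    have h2 : Tendsto (fun r : ℝ => 1 + C * r ^ α) (𝓝[>] (0:ℝ)) (𝓝 1) := by
      have := ((h1.const_mul C).const_add 1)
      simpa using this
    have h3 := (Real.continuousAt_rpow_const 1 (1/α) (Or.inl one_ne_zero)).tendsto
    have h4 := h3.comp h2
    simpa [Real.one_rpow, Function.comp_def] using h4
  have heqv : ∀ r ∈ Ioi (0:ℝ), E r / r = Gw r / ((1 + C * r ^ α) ^ (1/α)) := by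
    intro r hr
    have hrpos : (0:ℝ) < r := hr
    have hq : 0 < r ^ α := Real.rpow_pos_of_pos hrpos α
    have hA : (0:ℝ) < 1 + C * r ^ α := by positivity
    have hP : 0 < (1 + C * r ^ α) ^ (1/α) := Real.rpow_pos_of_pos hA _
    rw [hGw]
    show E r / r = E r * wfun α C r / ((1 + C * r ^ α) ^ (1/α))
    rw [wfun]
    field_simp
  have htend2 : Tendsto (fun r => E r / r) (𝓝[>] (0:ℝ)) (𝓝 l) := by
    have h5 : Tendsto (fun r => Gw r / ((1 + C * r ^ α) ^ (1/α))) (𝓝[>] (0:ℝ)) (𝓝 (l / 1)) :=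
      htend.div hdenom one_ne_zero
    rw [div_one] at h5
    apply h5.congr'
    filter_upwards [self_mem_nhdsWithin] with r hr
    exact (heqv r hr).symm
  refine ⟨l, htend2, ?_⟩
  have h6 : l ≤ Gw (r₀/2) :=
    csInf_le hbddb ⟨r₀/2, ⟨by positivity, by linarith⟩, rfl⟩
  have h7 : Gw (r₀/2) ≤ Gw r₀ :=
    hG (r₀/2) ⟨by positivity, by linarith⟩ r₀ ⟨hr₀, le_refl r₀⟩ (by linarith)
  have h8 : Gw r₀ = (E r₀ / r₀) * (1 + C * r₀ ^ α) ^ (1/α) := by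
    rw [hGw]
    show E r₀ * wfun α C r₀ = (E r₀ / r₀) * (1 + C * r₀ ^ α) ^ (1/α)
    rw [wfun]; ring
  linarith
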